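/- Let σ : ℝ → ℝ be Lipschitz continuous with σ(x) ≠ 0 for every x ∈ ℝ, fix a ∈ ℝ, define H(x) = ∫_a^x dt/σ(t), and let H⁻¹ denote its inverse. Then for every r, x ∈ ℝ, the function z ↦ H⁻¹(H(x) + r·z) is the unique solution on [0, 1] of the initial value problem y′(z) = r·σ(y(z)), y(0) = x; consequently the Marcus jump map satisfies ξ(r, x) = H⁻¹(H(x) + r). -/

import Mathlib

open MeasureTheory Set

/-- The inverse of a strictly monotone surjection on ℝ is continuous. -/
lemma continuous_of_rightInv_strictMono {F G : ℝ → ℝ} (hm : StrictMono F)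
    (hr : Function.RightInverse G F) : Continuous G := by
  have hsurj : Function.Surjective F := hr.surjective
  have hGE : G = ⇑(StrictMono.orderIsoOfSurjective F hm hsurj).symm := by
    funext y
    apply hm.injective
    rw [hr y]
    exact (StrictMono.orderIsoOfSurjective_self_symm_apply F hm hsurj y).symm
  rw [hGE]
  exact (StrictMono.orderIsoOfSurjective F hm hsurj).symm.continuous

/-- With H(x) = ∫_a^x dt/σ(t) and H⁻¹ its inverse, the function
z ↦ H⁻¹(H(x) + r·z) is the unique solution on [0,1] of y′ = r·σ(y), y(0) = x;
consequently the Marcus jump map (the value at z = 1 of any solution) equals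
H⁻¹(H(x) + r). -/
theorem fokker_planck_marcus_jump_map_formula
    (σ : ℝ → ℝ) (L : NNReal) (hσ : LipschitzWith L σ)
    (hne : ∀ x : ℝ, σ x ≠ 0) (a : ℝ)
    (H : ℝ → ℝ) (hH : H = fun x => ∫ t in a..x, 1 / σ t)
    (Hinv : ℝ → ℝ)
    (hleft : Function.LeftInverse Hinv H)
    (hright : Function.RightInverse Hinv H) :
    ∀ r x : ℝ,
      (∀ z ∈ Icc (0:ℝ) 1,
        HasDerivAt (fun w => Hinv (H x + r * w)) (r * σ (Hinv (H x + r * z))) z) ∧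
      Hinv (H x + r * 0) = x ∧
      (∀ u : ℝ → ℝ, u 0 = x →
        (∀ z ∈ Icc (0:ℝ) 1, HasDerivAt u (r * σ (u z)) z) →
        ∀ z ∈ Icc (0:ℝ) 1, u z = Hinv (H x + r * z)) ∧
      (∀ u : ℝ → ℝ, u 0 = x →
        (∀ z ∈ Icc (0:ℝ) 1, HasDerivAt u (r * σ (u z)) z) →
        u 1 = Hinv (H x + r)) := by
  -- continuity of 1/σ
  have hcont : Continuous fun t => 1 / σ t := continuous_const.div hσ.continuous hne
  -- H has derivative 1/σ everywhere
  have hH' : ∀ x : ℝ, HasDerivAt H (1 / σ x) x := by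
    intro x
    rw [hH]
    exact intervalIntegral.integral_hasDerivAt_right
      (hcont.intervalIntegrable a x)
      hcont.aestronglyMeasurable.stronglyMeasurableAtFilter
      hcont.continuousAt
  -- σ has constant sign
  have hsign : (∀ x : ℝ, 0 < σ x) ∨ (∀ x : ℝ, σ x < 0) := by
    rcases (hne 0).lt_or_gt with h0 | h0
    · right
      intro x
      by_contra hx
      have hx' : 0 < σ x := ((hne x).lt_or_gt).resolve_left hx
      have h0mem : (0 : ℝ) ∈ uIcc (σ 0) (σ x) :=
        Set.mem_uIcc.mpr (Or.inl ⟨h0.le, hx'.le⟩)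
      obtain ⟨c, -, hc⟩ := intermediate_value_uIcc (hσ.continuous.continuousOn) h0mem
      exact hne c hc
    · left
      intro x
      by_contra hx
      have hx' : σ x < 0 := ((hne x).lt_or_gt).resolve_right hx
      have h0mem : (0 : ℝ) ∈ uIcc (σ 0) (σ x) :=
        Set.mem_uIcc.mpr (Or.inr ⟨hx'.le, h0.le⟩)
      obtain ⟨c, -, hc⟩ := intermediate_value_uIcc (hσ.continuous.continuousOn) h0mem
      exact hne c hc
  -- Hinv is continuous
  have hinvcont : Continuous Hinv := by
    rcases hsign with hpos | hneg
    · exact continuous_of_rightInv_strictMono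
        (strictMono_of_hasDerivAt_pos hH' fun x => one_div_pos.mpr (hpos x)) hright
    · have hmono : StrictMono fun x => -H x := by
        have : StrictAnti H := strictAnti_of_hasDerivAt_neg hH' fun x => by
          have := hneg x
          exact one_div_neg.mpr this
        exact this.neg
      have hr' : Function.RightInverse (fun y => Hinv (-y)) (fun x => -H x) := by
        intro y
        simp [hright (-y)]
      have hc := continuous_of_rightInv_strictMono hmono hr'
      have : Hinv = (fun y => Hinv (-y)) ∘ (fun y : ℝ => -y) := by
        funext y; simp
      rw [this]
      exact hc.comp continuous_neg
  -- Hinv has derivative σ ∘ Hinv everywhere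
  have hinv' : ∀ y : ℝ, HasDerivAt Hinv (σ (Hinv y)) y := by
    intro y
    have h1 : HasDerivAt H (1 / σ (Hinv y)) (Hinv y) := hH' _
    have h2 := HasDerivAt.of_local_left_inverse hinvcont.continuousAt h1
      (one_div_ne_zero (hne _)) (Filter.Eventually.of_forall hright)
    simpa [one_div] using h2
  intro r x
  -- the candidate solution and its derivative
  have hsol : ∀ z : ℝ,
      HasDerivAt (fun w => Hinv (H x + r * w)) (r * σ (Hinv (H x + r * z))) z := by
    intro z
    have hin : HasDerivAt (fun w : ℝ => H x + r * w) r z := by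
      simpa using ((hasDerivAt_id z).const_mul r).const_add (H x)
    have := (hinv' (H x + r * z)).comp z hin
    simpa [mul_comm, Function.comp_def] using this
  have hinit : Hinv (H x + r * 0) = x := by simpa using hleft x
  -- uniqueness
  have huniq : ∀ u : ℝ → ℝ, u 0 = x →
      (∀ z ∈ Icc (0:ℝ) 1, HasDerivAt u (r * σ (u z)) z) →
      ∀ z ∈ Icc (0:ℝ) 1, u z = Hinv (H x + r * z) := by
    intro u hu0 hu' z hz
    have hlip : ∀ t : ℝ, LipschitzOnWith (‖r‖₊ * L) (fun y => r * σ y) univ := by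
      intro t
      have : LipschitzWith (‖r‖₊ * L) (fun y => r * σ y) := by
        simpa [smul_eq_mul, Function.comp_def] using (lipschitzWith_smul (β := ℝ) r).comp hσ
      exact this.lipschitzOnWith
    have key := ODE_solution_unique_of_mem_Icc_right (v := fun _ y => r * σ y)
      (s := fun _ => univ) (K := ‖r‖₊ * L) (a := (0:ℝ)) (b := 1) (fun t _ => hlip t)
      (fun w hw => ((hu' w hw).continuousAt).continuousWithinAt)
      (fun w hw => ((hu' w (Ico_subset_Icc_self hw)).hasDerivWithinAt))
      (fun _ _ => trivial)
      (fun w _ => ((hsol w).continuousAt).continuousWithinAt)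
      (fun w _ => (hsol w).hasDerivWithinAt)
      (fun _ _ => trivial)
      (by rw [hu0]; exact hinit.symm)
    exact key hz
  refine ⟨fun z _ => hsol z, hinit, huniq, ?_⟩
  intro u hu0 hu'
  have := huniq u hu0 hu' 1 ⟨zero_le_one, le_refl 1⟩
  simpa using this
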